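/- The Banach space L₁(μ) (for any measure μ) is a metric space of negative type: the metric space (L₁(μ), √(‖x−y‖₁)) embeds isometrically into a Hilbert space. Equivalently, for any x₁,…,x_n ∈ L₁(μ) and c₁,…,c_n ∈ ℝ with Σ cᵢ = 0, we have Σᵢ Σⱼ cᵢ cⱼ ‖xᵢ − xⱼ‖₁ ≤ 0. -/

import Mathlib

open MeasureTheory Set

lemma min_posdef {n : ℕ} (a : Fin n → ℝ) (ha : ∀ i, 0 ≤ a i) (c : Fin n → ℝ) :
    0 ≤ ∑ i, ∑ j, c i * c j * min (a i) (a j) := by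
  set f : Fin n → ℝ → ℝ := fun i => (Ioo (0:ℝ) (a i)).indicator 1 with hf
  have hindint : ∀ r s : ℝ, Integrable ((Ioo r s).indicator (1 : ℝ → ℝ)) := by
    intro r s
    rw [integrable_indicator_iff measurableSet_Ioo]
    exact (integrableOn_const_iff (C := (1:ℝ))).2 (Or.inr (by simp [Real.volume_Ioo]))
  have prodeq : ∀ i j, (fun t => f i t * f j t)
      = (Ioo (0:ℝ) (min (a i) (a j))).indicator 1 := by
    intro i j
    funext t
    simp only [hf, Set.indicator_apply, Set.mem_Ioo, lt_min_iff, Pi.one_apply]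
    split_ifs <;> simp_all
  have hmul : ∀ i j, Integrable (fun t => (c i * c j) * (f i t * f j t)) := by
    intro i j
    have : Integrable (fun t => f i t * f j t) := by
      rw [prodeq i j]; exact hindint 0 _
    exact this.const_mul _
  have key : ∀ i j, ∫ t, f i t * f j t = min (a i) (a j) := by
    intro i j
    rw [prodeq i j, integral_indicator_one measurableSet_Ioo, Real.volume_real_Ioo_of_le] <;> simp [le_min (ha i) (ha j)]
  have : ∑ i, ∑ j, c i * c j * min (a i) (a j)
      = ∫ t, (∑ i, c i * f i t)^2 := by
    have hsq : ∀ t, (∑ i, c i * f i t)^2 = ∑ i, ∑ j, (c i * c j) * (f i t * f j t) := by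
      intro t
      rw [sq, Finset.sum_mul_sum]
      refine Finset.sum_congr rfl fun i _ => Finset.sum_congr rfl fun j _ => by ring
    simp_rw [hsq]
    rw [integral_finset_sum _ (fun i _ => integrable_finset_sum _ (fun j _ => hmul i j))]
    refine Finset.sum_congr rfl fun i _ => ?_
    rw [integral_finset_sum _ (fun j _ => hmul i j)]
    refine Finset.sum_congr rfl fun j _ => ?_
    rw [integral_const_mul, key]
  rw [this]
  exact integral_nonneg fun t => sq_nonneg _

lemma real_neg_type {n : ℕ} (a : Fin n → ℝ) (c : Fin n → ℝ) (hc : ∑ i, c i = 0) :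
    ∑ i, ∑ j, c i * c j * |a i - a j| ≤ 0 := by
  set C : ℝ := ∑ k, |a k| with hC
  set b : Fin n → ℝ := fun i => a i + C with hb
  have hbnn : ∀ i, 0 ≤ b i := by
    intro i
    have h1 : |a i| ≤ C := Finset.single_le_sum (f := fun k => |a k|) (fun k _ => abs_nonneg _) (Finset.mem_univ i)
    have h2 := neg_abs_le (a i)
    simp only [hb]; linarith
  have habs : ∀ i j, |a i - a j| = b i + b j - 2 * min (b i) (b j) := by
    intro i j
    have h1 : a i - a j = b i - b j := by simp only [hb]; ring
    rw [h1]
    rcases le_total (b i) (b j) with h | h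
    · rw [abs_of_nonpos (by linarith), min_eq_left h]; ring
    · rw [abs_of_nonneg (by linarith), min_eq_right h]; ring
  have step :=
    calc ∑ i, ∑ j, c i * c j * |a i - a j|
        = ∑ i, ∑ j, (c i * b i * c j + c i * (c j * b j)
            - 2 * (c i * c j * min (b i) (b j))) :=
          Finset.sum_congr rfl fun i _ => Finset.sum_congr rfl fun j _ => by
            rw [habs]; ring
      _ = ∑ i, ((c i * b i) * ∑ j, c j + c i * ∑ j, (c j * b j)
            - 2 * ∑ j, (c i * c j * min (b i) (b j))) := by
          refine Finset.sum_congr rfl fun i _ => ?_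
          rw [Finset.sum_sub_distrib, Finset.sum_add_distrib, ← Finset.mul_sum,
            ← Finset.mul_sum, ← Finset.mul_sum]
      _ = -2 * ∑ i, ∑ j, (c i * c j * min (b i) (b j)) := by
          simp only [hc, mul_zero, zero_add]
          rw [Finset.sum_sub_distrib, ← Finset.sum_mul, hc, zero_mul, zero_sub,
            ← Finset.mul_sum]
          ring
  rw [step]
  have := min_posdef b hbnn c
  linarith

/-- `L₁(μ)` is of negative type: for any `x₁,…,xₙ ∈ L₁(μ)` and reals
`c₁,…,cₙ` with `∑ cᵢ = 0`, we have `∑ᵢ∑ⱼ cᵢcⱼ ‖xᵢ − xⱼ‖₁ ≤ 0`. -/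
theorem L1_negative_type {α : Type*} [MeasurableSpace α] (μ : Measure α)
    (n : ℕ) (x : Fin n → Lp ℝ 1 μ) (c : Fin n → ℝ) (hc : ∑ i, c i = 0) :
    ∑ i, ∑ j, c i * c j * ‖x i - x j‖ ≤ 0 := by
  have hnorm : ∀ i j, ‖x i - x j‖ = ∫ a, |x i a - x j a| ∂μ := by
    intro i j
    rw [L1.norm_eq_integral_norm]
    refine integral_congr_ae ?_
    filter_upwards [Lp.coeFn_sub (x i) (x j)] with a h
    rw [h]; simp [Real.norm_eq_abs]
  have hint : ∀ i j, Integrable (fun a => c i * c j * |x i a - x j a|) μ := by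
    intro i j
    have h1 : Integrable (fun a => ((x i - x j : Lp ℝ 1 μ) : α → ℝ) a) μ :=
      L1.integrable_coeFn _
    refine (h1.abs.congr ?_).const_mul _
    filter_upwards [Lp.coeFn_sub (x i) (x j)] with a h
    rw [h]; rfl
  calc ∑ i, ∑ j, c i * c j * ‖x i - x j‖
      = ∑ i, ∑ j, ∫ a, c i * c j * |x i a - x j a| ∂μ := by
        refine Finset.sum_congr rfl fun i _ => Finset.sum_congr rfl fun j _ => ?_
        rw [hnorm, integral_const_mul]
    _ = ∫ a, ∑ i, ∑ j, c i * c j * |x i a - x j a| ∂μ := by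
        rw [integral_finset_sum _ (fun i _ => integrable_finset_sum _ (fun j _ => hint i j))]
        exact Finset.sum_congr rfl fun i _ => (integral_finset_sum _ (fun j _ => hint i j)).symm
    _ ≤ 0 := integral_nonpos fun a => real_neg_type (fun i => x i a) c hc
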